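/- (Soundness, letvar case.) Suppose correspondence is preserved by the rules generated by Φ(S, n_k, nⱼ, p, R) for the body (induction hypothesis). Then correspondence is preserved by Φ(letvar x := e in S, nᵢ, nⱼ, p, R): if (μ₀,λ₀) with procedure p topmost corresponds to ⟨ρ₀,θ₀⟩, the operational rule BINDVAR allocates a fresh location l₀ ∉ dom(μ₀) ∪ dom(λ₀) with λ₁ = λ₀ ⊎ [l₀ := v] where (μ₀,λ₀,e) ⇓ v, executes [l₀/x]S, and deallocates l₀, while the P-BINDVAR rule extends η(p) with x := e and moves control to the body entry n_k; then the configuration (μ₁,λ₁) after binding corresponds to the extended pushdown state, and the final configuration (μ', λ' = λ₂ \ {l₀}) after deallocation corresponds to the final pushdown state ⟨ρ',θ'⟩ at nⱼ. -/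
import Mathlib


/-!
STATEMENT 11 (Soundness, letvar case).  Setup as in the other soundness
cases; `G` (injective) records which stack location corresponds to which
local variable of the topmost procedure p, and the letvar-bound variable x
occupies the fresh location l₀ (G l₀ = some x, as given by the
local-variable unification).  The operational rule BINDVAR allocates a
fresh location l₀ ∉ dom(μ₀) ∪ dom(λ₀), sets λ₁ = λ₀ ⊎ [l₀ := v] where
(μ₀,λ₀,e) ⇓ v, executes the body [l₀/x]S (relation `OpS`, from (μ₀,λ₁) to
(μ₂,λ₂)), and finally deallocates l₀ (λ' = λ₂ \ {l₀}, μ' = μ₂).  The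
P-BINDVAR rule extends η(p) with x := e (η₁ = η₀[x := v], with v the value
of e) and moves control to the body entry n_k, followed by the body rules
Φ(S,n_k,nⱼ,p,R) (relation `PdS`, from (ρ₀,η₁) to (ρ₂,η₂)); the final
pushdown state at nⱼ is (ρ', η') = (ρ₂, η₂).  Given the induction
hypothesis that correspondence is preserved by the body rules, the
configuration (μ₀,λ₁) after binding corresponds to the extended pushdown
state (ρ₀,η₁), and the final configuration (μ',λ') after deallocation
corresponds to the final pushdown state ⟨ρ',θ'⟩ at nⱼ.
-/

abbrev Loc := ℕ
abbrev Val := ℤ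
abbrev Var := String

abbrev Cfg := (Loc → Option Val) × (Loc → Option Val)

abbrev PdState := (Loc → Val) × (Var → Val)

def Corresponds (G : Loc → Option Var) (c : Cfg) (s : PdState) : Prop :=
  (∀ l, (c.1 l).isSome → c.1 l = some (s.1 l)) ∧
  (∀ l x, (c.2 l).isSome → G l = some x → c.2 l = some (s.2 x))

def Preserves (G : Loc → Option Var) (Op : Cfg → Cfg → Prop)
    (Pd : PdState → PdState → Prop) : Prop :=
  ∀ c s c' s', Corresponds G c s → Op c c' → Pd s s' → Corresponds G c' s'

theorem soundness_bindvar (G : Loc → Option Var)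
    (hGinj : ∀ l₁ l₂ x, G l₁ = some x → G l₂ = some x → l₁ = l₂)
    (x : Var) (l₀ : Loc) (v : Val)
    (μ₀ lam₀ lam₁ μ₂ lam₂ μ' lam' : Loc → Option Val)
    (ρ₀ ρ₂ ρ' : Loc → Val) (η₀ η₁ η₂ η' : Var → Val)
    (OpS : Cfg → Cfg → Prop) (PdS : PdState → PdState → Prop)
    -- induction hypothesis for the body rules Φ(S,n_k,nⱼ,p,R)
    (hIH : Preserves G OpS PdS)
    (hcorr : Corresponds G (μ₀, lam₀) (ρ₀, η₀))
    -- l₀ is fresh: l₀ ∉ dom(μ₀) and l₀ ∉ dom(λ₀)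
    (hfreshμ : μ₀ l₀ = none) (hfreshlam : lam₀ l₀ = none)
    -- the fresh location l₀ corresponds to the letvar-bound variable x
    (hGl₀ : G l₀ = some x)
    -- BINDVAR: λ₁ = λ₀ ⊎ [l₀ := v], with (μ₀,λ₀,e) ⇓ v
    (hbind : lam₁ = Function.update lam₀ l₀ (some v))
    -- P-BINDVAR: η₁ = η₀[x := e]
    (hpbind : η₁ = Function.update η₀ x v)
    -- body executions: (μ₀,λ₁,[l₀/x]S) ⇓ (μ₂,λ₂) and (ρ₀,η₁) → (ρ₂,η₂)
    (hOp : OpS (μ₀, lam₁) (μ₂, lam₂)) (hPd : PdS (ρ₀, η₁) (ρ₂, η₂))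
    -- deallocation: μ' = μ₂, λ' = λ₂ \ {l₀}
    (hμ' : μ' = μ₂) (hdealloc : lam' = fun l => if l = l₀ then none else lam₂ l)
    -- final pushdown state at nⱼ
    (hρ' : ρ' = ρ₂) (hη' : η' = η₂) :
    Corresponds G (μ₀, lam₁) (ρ₀, η₁) ∧
    Corresponds G (μ', lam') (ρ', η') := by
  subst hbind hpbind hμ' hdealloc hρ' hη'
  obtain ⟨hheap, hstack⟩ := hcorr
  have h1 : Corresponds G (μ₀, Function.update lam₀ l₀ (some v))
      (ρ₀, Function.update η₀ x v) := by
    refine ⟨hheap, fun l y hl hG => ?_⟩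
    by_cases h : l = l₀
    · subst h
      rw [hGl₀] at hG; cases hG
      simp [Function.update]
    · have hy : y ≠ x := fun hxy => h (hGinj l l₀ x (hxy ▸ hG) hGl₀)
      simp only [Function.update, dif_neg h] at hl ⊢
      rw [dif_neg hy]
      exact hstack l y hl hG
  refine ⟨h1, ?_⟩
  obtain ⟨hheap2, hstack2⟩ := hIH _ _ _ _ h1 hOp hPd
  refine ⟨hheap2, fun l y hl hG => ?_⟩
  simp only at hl ⊢
  by_cases h : l = l₀
  · subst h; simp at hl
  · simp only [if_neg h] at hl ⊢
    exact hstack2 l y hl hG
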